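/- For every integer r ≥ 1 and every real z with 0 < z < 1, Σ_{k=0}^∞ C(k+r−1, k)³ z^k = (1−z)^{−r} · Σ_{k=0}^{r−1} ( 4z/(1−z)² )^k · C(r−1, k) · 2^{−2k} · Γ(2k+r) / ( Γ(r) Γ(k+1)² ). In particular, the series on the left converges. -/

import Mathlib

open Finset

/-- Vandermonde in range form. -/
lemma vand_range (a b c : ℕ) :
    ∑ t ∈ range (c + 1), a.choose t * b.choose (c - t) = (a + b).choose c := by
  rw [Nat.add_choose_eq, Finset.Nat.sum_antidiagonal_eq_sum_range_succ_mk]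

lemma vand_diag (m n : ℕ) :
    ∑ t ∈ range (m + 1), m.choose t * n.choose t = (m + n).choose m := by
  rw [← vand_range m n m, ← Finset.sum_range_reflect]
  refine Finset.sum_congr rfl fun t ht => ?_
  rw [Finset.mem_range] at ht
  have ht' : t ≤ m := by omega
  rw [show m + 1 - 1 - t = m - t from by omega, Nat.choose_symm ht']

lemma step1 (M k : ℕ) :
    (M + k).choose k = ∑ t ∈ range (k + 1), M.choose t * k.choose t := by
  rw [Nat.add_choose_eq, Finset.Nat.sum_antidiagonal_eq_sum_range_succ_mk]
  refine Finset.sum_congr rfl fun t ht => ?_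
  rw [Finset.mem_range] at ht
  rw [← Nat.choose_symm (by omega : t ≤ k)]

lemma binom_inner_sum (m n t : ℕ) (ht : t ≤ m) :
    ∑ k ∈ range (m + 1), m.choose k * n.choose k * k.choose t
      = m.choose t * (m - t + n).choose m := by
  have h1 : ∑ k ∈ range (m + 1), m.choose k * n.choose k * k.choose t
      = ∑ k ∈ Finset.Ico t (m + 1), m.choose k * n.choose k * k.choose t := by
    rw [Finset.range_eq_Ico,
      ← Finset.sum_Ico_consecutive _ (Nat.zero_le t) (by omega : t ≤ m + 1)]
    have : ∑ k ∈ Finset.Ico 0 t, m.choose k * n.choose k * k.choose t = 0 := by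
      apply Finset.sum_eq_zero
      intro k hk
      rw [Finset.mem_Ico] at hk
      rw [Nat.choose_eq_zero_of_lt hk.2, Nat.mul_zero]
    rw [this, zero_add]
  rw [h1, Finset.sum_Ico_eq_sum_range]
  have h2 : ∀ s ∈ range (m + 1 - t),
      m.choose (t + s) * n.choose (t + s) * (t + s).choose t
        = m.choose t * ((m - t).choose s * n.choose (t + s)) := by
    intro s hs
    rw [Finset.mem_range] at hs
    have h3 : m.choose (t + s) * (t + s).choose t = m.choose t * (m - t).choose s := by
      have := Nat.choose_mul (n := m) (by omega : t ≤ t + s)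
      rw [this, show t + s - t = s from by omega]
    calc m.choose (t + s) * n.choose (t + s) * (t + s).choose t
        = m.choose (t + s) * (t + s).choose t * n.choose (t + s) := by ring
      _ = m.choose t * (m - t).choose s * n.choose (t + s) := by rw [h3]
      _ = m.choose t * ((m - t).choose s * n.choose (t + s)) := by ring
  rw [Finset.sum_congr rfl h2, ← Finset.mul_sum]
  congr 1
  -- ∑ s ∈ range (m+1-t), (m-t).choose s * n.choose (t+s) = (m-t+n).choose m
  rw [← Finset.sum_range_reflect]
  have h4 : ∀ s ∈ range (m + 1 - t),
      (m - t).choose (m + 1 - t - 1 - s) * n.choose (t + (m + 1 - t - 1 - s))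
        = (m - t).choose s * n.choose (m - s) := by
    intro s hs
    rw [Finset.mem_range] at hs
    rw [show m + 1 - t - 1 - s = m - t - s from by omega,
      Nat.choose_symm (by omega : s ≤ m - t),
      show t + (m - t - s) = m - s from by omega]
  rw [Finset.sum_congr rfl h4, ← vand_range (m - t) n m]
  apply Finset.sum_subset (Finset.range_subset_range.2 (by omega))
  · intro x _ hx
    rw [Finset.mem_range] at hx
    rw [Nat.choose_eq_zero_of_lt (by omega : m - t < x), Nat.zero_mul]

lemma key_id (m n : ℕ) :
    ∑ k ∈ range (m + 1), m.choose k * n.choose k * (m + n + k).choose k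
      = (m + n).choose m ^ 2 := by
  have h1 : ∀ k ∈ range (m + 1),
      m.choose k * n.choose k * (m + n + k).choose k
        = ∑ t ∈ range (m + 1), (m + n).choose t * (m.choose k * n.choose k * k.choose t) := by
    intro k hk
    rw [Finset.mem_range] at hk
    rw [step1 (m + n) k, Finset.mul_sum]
    rw [Finset.sum_subset (by intro x hx; rw [Finset.mem_range] at hx ⊢; omega :
      range (k + 1) ⊆ range (m + 1))]
    · exact Finset.sum_congr rfl fun t _ => by ring
    · intro t _ ht
      rw [Finset.mem_range] at ht
      rw [Nat.choose_eq_zero_of_lt (by omega : k < t)]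
      ring
  rw [Finset.sum_congr rfl h1, Finset.sum_comm]
  have h2 : ∀ t ∈ range (m + 1),
      ∑ k ∈ range (m + 1), (m + n).choose t * (m.choose k * n.choose k * k.choose t)
        = (m + n).choose m * (m.choose t * n.choose t) := by
    intro t htm
    rw [Finset.mem_range] at htm
    have ht : t ≤ m := by omega
    rw [← Finset.mul_sum, binom_inner_sum m n t ht]
    -- (m+n).choose t * ((m).choose t * (m - t + n).choose m) = (m+n).choose m * (m.choose t * n.choose t)
    have h3 : (m + n).choose t * (m - t + n).choose m = (m + n).choose m * n.choose t := by
      rcases le_or_gt t n with h | h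
      · have e1 := Nat.choose_mul (n := m + n) (by omega : t ≤ m + t)
        have e2 := Nat.choose_mul (n := m + n) (by omega : m ≤ m + t)
        rw [show m + n - t = m - t + n from by omega, show m + t - t = m from by omega] at e1
        rw [show m + n - m = n from by omega, show m + t - m = t from by omega] at e2
        have e3 : (m + t).choose t = (m + t).choose m := by
          rw [← Nat.choose_symm (by omega : m ≤ m + t), show m + t - m = t from by omega]
        rw [← e1, e3, e2]
      · rw [Nat.choose_eq_zero_of_lt (by omega : n < t),
          Nat.choose_eq_zero_of_lt (by omega : m - t + n < m)]
        ring
    calc (m + n).choose t * (m.choose t * (m - t + n).choose m)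
        = m.choose t * ((m + n).choose t * (m - t + n).choose m) := by ring
      _ = m.choose t * ((m + n).choose m * n.choose t) := by rw [h3]
      _ = (m + n).choose m * (m.choose t * n.choose t) := by ring
  rw [Finset.sum_congr rfl h2, ← Finset.mul_sum, vand_diag, sq]

lemma nat_id (m n : ℕ) :
    ∑ k ∈ range (m + 1),
        m.choose k * (m + 2 * k).choose m * (2 * k).choose k * (n + k + m).choose (m + 2 * k)
      = (n + m).choose n ^ 3 := by
  have h1 : ∀ k ∈ range (m + 1),
      m.choose k * (m + 2 * k).choose m * (2 * k).choose k * (n + k + m).choose (m + 2 * k)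
        = (n + m).choose m * (m.choose k * n.choose k * (m + n + k).choose k) := by
    intro k _
    rcases le_or_gt k n with h | h
    · -- a) (n+k+m).choose (m+2k) * (m+2k).choose m = (n+k+m).choose m * (n+k).choose (2k)
      have ea := Nat.choose_mul (n := n + k + m) (by omega : m ≤ m + 2 * k)
      rw [show n + k + m - m = n + k from by omega, show m + 2 * k - m = 2 * k from by omega] at ea
      -- b) (n+k).choose (2k) * (2k).choose k = (n+k).choose k * n.choose k
      have eb := Nat.choose_mul (n := n + k) (by omega : k ≤ 2 * k)
      rw [show n + k - k = n from by omega, show 2 * k - k = k from by omega] at eb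
      -- c) (n+k+m).choose m * (n+k).choose k = (n+m+k).choose k * (n+m).choose m
      have ec1 := Nat.choose_mul (n := n + k + m) (by omega : m ≤ m + k)
      rw [show n + k + m - m = n + k from by omega, show m + k - m = k from by omega] at ec1
      have ec2 := Nat.choose_mul (n := n + k + m) (by omega : k ≤ m + k)
      rw [show n + k + m - k = n + m from by omega, show m + k - k = m from by omega] at ec2
      have ec3 : (m + k).choose m = (m + k).choose k := by
        rw [← Nat.choose_symm (by omega : k ≤ m + k), show m + k - k = m from by omega]
      have hc : (n + k + m).choose m * (n + k).choose k
          = (n + k + m).choose k * (n + m).choose m := by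
        rw [← ec1, ec3, ec2]
      have hmnk : (m + n + k) = (n + k + m) := by omega
      rw [hmnk]
      calc m.choose k * (m + 2 * k).choose m * (2 * k).choose k * (n + k + m).choose (m + 2 * k)
          = m.choose k * ((n + k + m).choose (m + 2 * k) * (m + 2 * k).choose m)
              * (2 * k).choose k := by ring
        _ = m.choose k * ((n + k + m).choose m * (n + k).choose (2 * k)) * (2 * k).choose k := by
              rw [ea]
        _ = m.choose k * (n + k + m).choose m * ((n + k).choose (2 * k) * (2 * k).choose k) := by
              ring
        _ = m.choose k * (n + k + m).choose m * ((n + k).choose k * n.choose k) := by rw [eb]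
        _ = m.choose k * n.choose k * ((n + k + m).choose m * (n + k).choose k) := by ring
        _ = m.choose k * n.choose k * ((n + k + m).choose k * (n + m).choose m) := by rw [hc]
        _ = (n + m).choose m * (m.choose k * n.choose k * (n + k + m).choose k) := by ring
    · rw [Nat.choose_eq_zero_of_lt (by omega : n + k + m < m + 2 * k),
        Nat.choose_eq_zero_of_lt (by omega : n < k)]
      ring
  rw [Finset.sum_congr rfl h1, ← Finset.mul_sum, key_id m n]
  have hsym : (n + m).choose m = (n + m).choose n := by
    rw [← Nat.choose_symm (by omega : n ≤ n + m), show n + m - n = m from by omega]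
  rw [show m + n = n + m from by omega, hsym]
  ring

lemma hasSum_aux (m k : ℕ) {z : ℝ} (hz : ‖z‖ < 1) :
    HasSum (fun n : ℕ =>
        ((m.choose k * (m + 2 * k).choose m * (2 * k).choose k : ℕ) : ℝ) *
          ((n + k + m).choose (m + 2 * k) : ℝ) * z ^ n)
      (((m.choose k * (m + 2 * k).choose m * (2 * k).choose k : ℕ) : ℝ) * z ^ k *
        (1 / (1 - z) ^ (m + 2 * k + 1))) := by
  set a : ℝ := ((m.choose k * (m + 2 * k).choose m * (2 * k).choose k : ℕ) : ℝ) with ha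
  have h0 : ∀ x ∉ Set.range (fun n : ℕ => n + k),
      a * ((x + k + m).choose (m + 2 * k) : ℝ) * z ^ x = 0 := by
    intro x hx
    have hxk : x < k := by
      by_contra h
      exact hx ⟨x - k, show x - k + k = x by omega⟩
    rw [Nat.choose_eq_zero_of_lt (by omega : x + k + m < m + 2 * k)]
    simp
  refine ((Function.Injective.hasSum_iff (add_left_injective k) h0)).mp ?_
  have hfun : ((fun n : ℕ => a * ((n + k + m).choose (m + 2 * k) : ℝ) * z ^ n) ∘
        (fun n : ℕ => n + k))
      = fun n : ℕ => a * z ^ k * (((n + (m + 2 * k)).choose (m + 2 * k) : ℝ) * z ^ n) := by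
    funext n
    simp only [Function.comp]
    rw [show n + k + k + m = n + (m + 2 * k) from by omega, pow_add]
    ring
  rw [hfun]
  exact (hasSum_choose_mul_geometric_of_norm_lt_one (m + 2 * k) hz).mul_left _

/-- Hypergeometric-type identity: for integer `r ≥ 1` and `0 < z < 1`,
`Σ_{k=0}^∞ C(k+r−1, k)³ z^k` converges and equals the stated finite sum. -/
theorem stmt_5 (r : ℕ) (hr : 1 ≤ r) (z : ℝ) (hz : z ∈ Set.Ioo (0 : ℝ) 1) :
    Summable (fun k : ℕ => (Nat.choose (k + r - 1) k : ℝ) ^ 3 * z ^ k) ∧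
      ∑' k : ℕ, (Nat.choose (k + r - 1) k : ℝ) ^ 3 * z ^ k =
        (1 - z) ^ (-(r : ℤ)) *
          ∑ k ∈ Finset.range r,
            (4 * z / (1 - z) ^ 2) ^ k * (Nat.choose (r - 1) k : ℝ) *
              (2 : ℝ) ^ (-(2 * k : ℤ)) *
              (Real.Gamma (2 * k + r) / (Real.Gamma r * Real.Gamma (k + 1) ^ 2)) := by
  obtain ⟨hz0, hz1⟩ := hz
  obtain ⟨m, rfl⟩ : ∃ m, r = m + 1 := ⟨r - 1, by omega⟩
  have hz' : ‖z‖ < 1 := by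
    rw [Real.norm_eq_abs, abs_of_pos hz0]; exact hz1
  have h1z : (0 : ℝ) < 1 - z := by linarith
  have h1z' : (1 : ℝ) - z ≠ 0 := ne_of_gt h1z
  have hsum : HasSum (fun n : ℕ => ((n + m).choose n : ℝ) ^ 3 * z ^ n)
      (∑ k ∈ Finset.range (m + 1),
        ((m.choose k * (m + 2 * k).choose m * (2 * k).choose k : ℕ) : ℝ) * z ^ k *
          (1 / (1 - z) ^ (m + 2 * k + 1))) := by
    have h := hasSum_sum (fun k (_ : k ∈ Finset.range (m + 1)) => hasSum_aux m k hz')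
    have hfun : (fun n : ℕ => ∑ k ∈ Finset.range (m + 1),
          ((m.choose k * (m + 2 * k).choose m * (2 * k).choose k : ℕ) : ℝ) *
            ((n + k + m).choose (m + 2 * k) : ℝ) * z ^ n)
        = fun n : ℕ => ((n + m).choose n : ℝ) ^ 3 * z ^ n := by
      funext n
      rw [← Finset.sum_mul]
      congr 1
      exact_mod_cast nat_id m n
    rwa [hfun] at h
  have hgoalfun : (fun n : ℕ => ((n + (m + 1) - 1).choose n : ℝ) ^ 3 * z ^ n)
      = fun n : ℕ => ((n + m).choose n : ℝ) ^ 3 * z ^ n := by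
    funext n
    rw [show n + (m + 1) - 1 = n + m from by omega]
  rw [hgoalfun]
  refine ⟨hsum.summable, ?_⟩
  rw [hsum.tsum_eq, Finset.mul_sum]
  refine Finset.sum_congr rfl fun k _ => ?_
  have hg1 : Real.Gamma (2 * (k : ℝ) + ((m : ℕ) + 1 : ℕ)) = (2 * k + m).factorial := by
    rw [show 2 * (k : ℝ) + (((m : ℕ) + 1 : ℕ) : ℝ) = ((2 * k + m : ℕ) : ℝ) + 1 from by
      push_cast; ring, Real.Gamma_nat_eq_factorial]
  have hg2 : Real.Gamma (((m + 1 : ℕ) : ℝ)) = m.factorial := by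
    rw [show (((m + 1 : ℕ) : ℝ)) = ((m : ℕ) : ℝ) + 1 from by push_cast; ring,
      Real.Gamma_nat_eq_factorial]
  have hg3 : Real.Gamma ((k : ℝ) + 1) = k.factorial := Real.Gamma_nat_eq_factorial k
  rw [hg1, hg2, hg3]
  have e1 : ((2 * k + m).factorial : ℝ)
      = ((m + 2 * k).choose m : ℝ) * m.factorial * (2 * k).factorial := by
    have := Nat.choose_mul_factorial_mul_factorial (by omega : m ≤ m + 2 * k)
    rw [show m + 2 * k - m = 2 * k from by omega] at this
    rw [show 2 * k + m = m + 2 * k from by omega]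
    exact_mod_cast (congrArg (fun x : ℕ => (x : ℝ)) this).symm
  have e2 : ((2 * k).factorial : ℝ)
      = ((2 * k).choose k : ℝ) * k.factorial * k.factorial := by
    have := Nat.choose_mul_factorial_mul_factorial (by omega : k ≤ 2 * k)
    rw [show 2 * k - k = k from by omega] at this
    exact_mod_cast (congrArg (fun x : ℕ => (x : ℝ)) this).symm
  have hz2 : ((1 : ℝ) - z) ^ 2 ≠ 0 := pow_ne_zero _ h1z'
  have hmf : (m.factorial : ℝ) ≠ 0 := Nat.cast_ne_zero.mpr m.factorial_ne_zero
  have hkf : (k.factorial : ℝ) ≠ 0 := Nat.cast_ne_zero.mpr k.factorial_ne_zero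
  rw [e1, e2]
  rw [show (-((m + 1 : ℕ) : ℤ)) = -(((m + 1 : ℕ) : ℤ)) from rfl, zpow_neg, zpow_natCast]
  rw [show (-(2 * (k : ℤ))) = -(((2 * k : ℕ) : ℤ)) from by push_cast; ring, zpow_neg,
    zpow_natCast]
  have h4 : (2 : ℝ) ^ (2 * k) = 4 ^ k := by
    rw [pow_mul]; norm_num
  rw [h4]
  rw [show m + 2 * k + 1 = (m + 1) + 2 * k from by omega, pow_add]
  rw [div_pow, mul_pow, ← pow_mul]
  set w : ℝ := 1 - z with hw
  push_cast
  field_simp
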